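/- Let V be a real vector space of dimension r and Δ ⊂ V∖{0} a finite spanning subset with Δ = −Δ. Let γ be a chamber of V and p ∈ γ. Then for every basis σ of Δ, every α ∈ Δ∖σ with expansion α = Σ_{β∈σ} c_{αβ}β, the family A_γ(σ) := [C(σ)'_γ] satisfies the Orlik–Solomon relation A_γ(σ) ≡ Σ_{β∈σ, c_{αβ}≠0} sign(c_{αβ}) · A_γ(σ∪{α}∖{β}) modulo ℒ𝒞_Δ, i.e. these relations hold in the quotient group 𝒞_Δ/ℒ𝒞_Δ. -/

import Mathlib

set_option linter.unusedSectionVars false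
set_option linter.unusedVariables false
set_option linter.unusedTactic false
set_option maxHeartbeats 1000000

noncomputable section
open scoped Classical
open Finset Submodule Filter

namespace JK

variable {V : Type} [AddCommGroup V] [Module ℝ V] [FiniteDimensional ℝ V]

/-- The closed convex cone generated by the finite set `κ`. -/
def coneOf (κ : Finset V) : Set V :=
  {h | ∃ c : V → ℝ, (∀ v, 0 ≤ c v) ∧ h = ∑ v ∈ κ, c v • v}

/-- The characteristic function (with values in `ℤ`) of a set. -/
def charFun (A : Set V) : V → ℤ := fun h => if h ∈ A then 1 else 0

variable (V) in
/-- `𝒞_Δ`: the additive group of `ℤ`-valued functions on `V` generated by the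
characteristic functions of the polyhedral cones `C(κ)`, `κ ⊆ Δ`. -/
def Ccone (Δ : Finset V) : AddSubgroup (V → ℤ) :=
  AddSubgroup.closure {f | ∃ κ : Finset V, κ ⊆ Δ ∧ f = charFun (coneOf κ)}

variable (V) in
/-- `ℒ𝒞_Δ`: the subgroup of `𝒞_Δ` generated by the characteristic functions of the cones
`C(κ)` (`κ ⊆ Δ`) which contain a line. -/
def LCcone (Δ : Finset V) : AddSubgroup (V → ℤ) :=
  AddSubgroup.closure {f | ∃ κ : Finset V, κ ⊆ Δ ∧
    (∃ v : V, v ≠ 0 ∧ ∀ t : ℝ, t • v ∈ coneOf κ) ∧ f = charFun (coneOf κ)}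

/-- A wall: a hyperplane spanned by elements of `Δ`. -/
def IsWallV (Δ : Finset V) (Wl : Submodule ℝ V) : Prop :=
  (∃ s : Finset V, s ⊆ Δ ∧ Submodule.span ℝ (s : Set V) = Wl) ∧
  Module.finrank ℝ Wl = Module.finrank ℝ V - 1

/-- A regular point of `V`: a point on no wall. -/
def RegPtV (Δ : Finset V) (p : V) : Prop := ∀ Wl, IsWallV Δ Wl → p ∉ Wl

/-- `A_γ(σ) = [C(σ)'_γ]`, for the chamber `γ` containing the regular point `p`:
the characteristic function of
`C(σ)'_p = C(β : p_β > 0) + C(β : p_β < 0)⁰`, where `p = Σ_β p_β β` in the basis `σ`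
(`⁰` denoting the relative interior). -/
def Agamma (σ : Finset V) (p : V) : V → ℤ := fun h =>
  if ∃ c cp : V → ℝ, p = (∑ β ∈ σ, cp β • β) ∧ h = (∑ β ∈ σ, c β • β) ∧
      ∀ β ∈ σ, (0 < cp β → 0 ≤ c β) ∧ (cp β < 0 → 0 < c β)
  then 1 else 0

/-! ### Auxiliary machinery -/

def posRepOn (b s : Finset V) (z : V) : Prop :=
  ∃ x : V → ℝ, z = ∑ v ∈ b, x v • v ∧ ∀ v ∈ s, 0 < x v

abbrev posRep (b : Finset V) (z : V) : Prop := posRepOn b b z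

def UC (b : Finset V) : Prop := ∀ x : V → ℝ, (∑ v ∈ b, x v • v) = 0 → ∀ v ∈ b, x v = 0

def URel (τ : Finset V) (lam : V → ℝ) : Prop :=
  ∀ μ : V → ℝ, (∑ v ∈ τ, μ v • v) = 0 → ∃ t : ℝ, ∀ v ∈ τ, μ v = t * lam v

def AgProp (b : Finset V) (p h : V) : Prop :=
  ∃ c cp : V → ℝ, p = (∑ β ∈ b, cp β • β) ∧ h = (∑ β ∈ b, c β • β) ∧
      ∀ β ∈ b, (0 < cp β → 0 ≤ c β) ∧ (cp β < 0 → 0 < c β)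

def ind (P : Prop) : ℤ := if P then 1 else 0

lemma ind_congr {P Q : Prop} (h : P ↔ Q) : ind P = ind Q := by
  unfold ind; exact if_congr h rfl rfl

lemma ind_pos {P : Prop} (h : P) : ind P = 1 := by unfold ind; exact if_pos h

lemma ind_neg {P : Prop} (h : ¬P) : ind P = 0 := by unfold ind; exact if_neg h

lemma charFun_eq (A : Set V) (h : V) : charFun A h = ind (h ∈ A) := rfl

lemma Agamma_eq (b : Finset V) (p h : V) :
    Agamma b p h = ind (AgProp b p h) := rfl

def lamF (α : V) (c : V → ℝ) : V → ℝ := fun v => if v = α then 1 else -c v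

lemma uc_rep_unique {b : Finset V} (h : UC b) {x y : V → ℝ} {z : V}
    (hx : z = ∑ v ∈ b, x v • v) (hy : z = ∑ v ∈ b, y v • v) : ∀ v ∈ b, x v = y v := by
  intro v hv
  have h0 : (∑ v ∈ b, (fun w => x w - y w) v • v) = 0 := by
    simp only [sub_smul, Finset.sum_sub_distrib, ← hx, ← hy, sub_self]
  have := h _ h0 v hv
  linarith

lemma uc_iff_li (b : Finset V) :
    UC b ↔ LinearIndependent ℝ (fun x : {y : V // y ∈ b} => (x : V)) := by
  rw [UC, Fintype.linearIndependent_iff]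
  constructor
  · intro hb g hg i
    have : (∑ v ∈ b, (fun w => if hw : w ∈ b then g ⟨w, hw⟩ else 0) v • v) = 0 := by
      rw [← Finset.sum_attach b (fun v => (if hv : v ∈ b then g ⟨v, hv⟩ else 0) • v)]
      rw [← hg, Finset.univ_eq_attach]
      exact Finset.sum_congr rfl fun i _ => by simp [i.2]
    have := hb _ this i i.2
    simpa [i.2] using this
  · intro hb x hx v hv
    have : (∑ i : {y : V // y ∈ b}, (fun i : {y : V // y ∈ b} => x i) i • (i : V)) = 0 := by
      rw [Finset.univ_eq_attach, Finset.sum_attach b (fun v => x v • v)]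
      exact hx
    exact hb _ this ⟨v, hv⟩

lemma mem_span_of_rep {b b' : Finset V} (hb : b' ⊆ b) {x : V → ℝ} {z : V}
    (hz : z = ∑ v ∈ b, x v • v) (h0 : ∀ v ∈ b, v ∉ b' → x v = 0) :
    z ∈ span ℝ (b' : Set V) := by
  have : z = ∑ v ∈ b', x v • v := by
    rw [hz, Finset.sum_subset hb]
    intro v hv hv'; rw [h0 v hv hv', zero_smul]
  rw [this]
  exact Submodule.sum_smul_mem _ _ fun v hv => subset_span hv

lemma exists_rep {b : Finset V} (hb : span ℝ (b : Set V) = ⊤) (z : V) :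
    ∃ x : V → ℝ, z = ∑ v ∈ b, x v • v := by
  have hz : z ∈ span ℝ (b : Set V) := by rw [hb]; trivial
  rcases mem_span_finset.1 hz with ⟨f, hf⟩
  exact ⟨f, hf.2.symm⟩

lemma rep_extend {τ : Finset V} {j : V} (hj : j ∈ τ) (x : V → ℝ) {z : V}
    (hz : z = ∑ v ∈ τ.erase j, x v • v) :
    z = ∑ v ∈ τ, (if v = j then 0 else x v) • v := by
  rw [← Finset.add_sum_erase τ _ hj, if_pos rfl, zero_smul, zero_add, hz]
  exact Finset.sum_congr rfl fun v hv => by rw [if_neg (Finset.mem_erase.1 hv).1]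

lemma rep_restrict {τ : Finset V} {j : V} (hj : j ∈ τ) {x : V → ℝ} {z : V}
    (hz : z = ∑ v ∈ τ, x v • v) (hxj : x j = 0) :
    z = ∑ v ∈ τ.erase j, x v • v := by
  rw [hz, ← Finset.add_sum_erase τ _ hj, hxj, zero_smul, zero_add]

lemma evcoord (a q : ℝ) (hq : q ≠ 0) :
    ∀ᶠ ε in nhdsWithin (0:ℝ) (Set.Ioi 0),
      (0 < (1-ε)*a + ε*q ↔ (0 ≤ a ∧ (q < 0 → 0 < a))) := by
  have tend : Tendsto (fun ε : ℝ => (1-ε)*a + ε*q) (nhdsWithin (0:ℝ) (Set.Ioi 0)) (nhds a) := by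
    have : Continuous (fun ε : ℝ => (1-ε)*a + ε*q) := by continuity
    have h0 : Tendsto (fun ε : ℝ => (1-ε)*a + ε*q) (nhds 0) (nhds ((1-0)*a+0*q)) :=
      this.tendsto 0
    simpa using h0.mono_left nhdsWithin_le_nhds
  rcases lt_trichotomy a 0 with ha | ha | ha
  · have : ∀ᶠ ε in nhdsWithin (0:ℝ) (Set.Ioi 0), (1-ε)*a + ε*q < 0 :=
      tend.eventually_lt_const ha
    filter_upwards [this] with ε hε
    constructor
    · intro h; linarith
    · rintro ⟨h, -⟩; linarith
  · subst ha
    filter_upwards [self_mem_nhdsWithin] with ε (hε : 0 < ε)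
    have : (1-ε)*0 + ε*q = ε*q := by ring
    rw [this]
    constructor
    · intro h
      refine ⟨le_refl 0, fun hq' => ?_⟩
      nlinarith
    · rintro ⟨-, h⟩
      rcases hq.lt_or_gt with h' | h'
      · exact absurd (h h') (lt_irrefl 0)
      · positivity
  · have : ∀ᶠ ε in nhdsWithin (0:ℝ) (Set.Ioi 0), 0 < (1-ε)*a + ε*q :=
      tend.eventually_const_lt ha
    filter_upwards [this] with ε hε
    simp only [hε, true_iff]
    exact ⟨le_of_lt ha, fun _ => ha⟩

lemma evwall (W : Submodule ℝ V) (p h : V) (hpW : p ∉ W) :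
    ∀ᶠ ε in nhdsWithin (0:ℝ) (Set.Ioi 0), h + ε • (p - h) ∉ W := by
  by_cases hex : ∃ e : ℝ, h + e • (p - h) ∈ W
  · obtain ⟨e, he⟩ := hex
    have key : ∀ ε : ℝ, ε ≠ e → h + ε • (p - h) ∉ W := by
      intro ε hne hmem
      have hd : (ε - e) • (p - h) ∈ W := by
        have := W.sub_mem hmem he
        simpa [sub_smul] using this
      have hph : (p - h) ∈ W := by
        have := W.smul_mem (ε - e)⁻¹ hd
        rwa [inv_smul_smul₀ (sub_ne_zero.2 hne)] at this
      have hh : h ∈ W := by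
        have := W.sub_mem hmem (W.smul_mem ε hph)
        simpa using this
      exact hpW (by simpa using W.add_mem hh hph)
    by_cases he0 : e = 0
    · filter_upwards [self_mem_nhdsWithin] with ε (hε : 0 < ε)
      exact key ε (by rw [he0]; exact ne_of_gt hε)
    · have : ∀ᶠ ε in nhdsWithin (0:ℝ) (Set.Ioi 0), ε ≠ e :=
        (eventually_ne_nhds (Ne.symm he0)).filter_mono nhdsWithin_le_nhds
      filter_upwards [this] with ε hε
      exact key ε hε
  · push_neg at hex
    exact Eventually.of_forall hex

lemma rep_affine {b : Finset V} {x q : V → ℝ} {h p : V}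
    (hh : h = ∑ v ∈ b, x v • v) (hp : p = ∑ v ∈ b, q v • v) (ε : ℝ) :
    h + ε • (p - h) = ∑ v ∈ b, ((1-ε) * x v + ε * q v) • v := by
  have e1 : h + ε • (p - h) = (1-ε) • h + ε • p := by module
  rw [e1, hh, hp, Finset.smul_sum, Finset.smul_sum, ← Finset.sum_add_distrib]
  exact Finset.sum_congr rfl fun v _ => by rw [smul_smul, smul_smul, ← add_smul]

lemma swap_lemma {τ : Finset V} {lam : V → ℝ}
    (hrel : (∑ v ∈ τ, lam v • v) = 0)
    {z : V} (hreg : ∀ v ∈ τ, ∀ w ∈ τ, v ≠ w → lam v ≠ 0 → lam w ≠ 0 →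
        z ∉ span ℝ (((τ.erase v).erase w : Finset V) : Set V))
    {j : V} (hj : j ∈ τ) (hjp : 0 < lam j) (hz : posRep (τ.erase j) z)
    {k₁ : V} (hk₁ : k₁ ∈ τ) (hk₁n : lam k₁ < 0) :
    ∃ k ∈ τ, lam k < 0 ∧ posRep (τ.erase k) z := by
  obtain ⟨x0, hx0, hx0pos⟩ := hz
  set x : V → ℝ := fun v => if v = j then 0 else x0 v with hxdef
  have hx : z = ∑ v ∈ τ, x v • v := rep_extend hj x0 hx0
  have hxnn : ∀ v ∈ τ, 0 ≤ x v := by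
    intro v hv
    by_cases hvj : v = j
    · simp [hxdef, hvj]
    · have := hx0pos v (Finset.mem_erase.2 ⟨hvj, hv⟩)
      simp only [hxdef, if_neg hvj]; linarith
  have hxpos : ∀ v ∈ τ, v ≠ j → 0 < x v := by
    intro v hv hvj
    have := hx0pos v (Finset.mem_erase.2 ⟨hvj, hv⟩)
    simpa [hxdef, if_neg hvj] using this
  set Nτ := τ.filter (fun v => lam v < 0) with hNdef
  have hNne : Nτ.Nonempty := ⟨k₁, Finset.mem_filter.2 ⟨hk₁, hk₁n⟩⟩
  obtain ⟨k₀, hk₀mem, hk₀min⟩ := Finset.exists_min_image Nτ (fun v => x v / (-lam v)) hNne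
  have hk₀τ : k₀ ∈ τ := (Finset.mem_filter.1 hk₀mem).1
  have hk₀n : lam k₀ < 0 := (Finset.mem_filter.1 hk₀mem).2
  have hk₀j : k₀ ≠ j := fun h => absurd (h ▸ hk₀n) (asymm hjp)
  set t : ℝ := x k₀ / (-lam k₀) with htdef
  have ht : 0 < t := div_pos (hxpos k₀ hk₀τ hk₀j) (by linarith)
  set ν : V → ℝ := fun v => x v + t * lam v with hνdef
  have hνz : z = ∑ v ∈ τ, ν v • v := by
    have : ∑ v ∈ τ, ν v • v = (∑ v ∈ τ, x v • v) + t • ∑ v ∈ τ, lam v • v := by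
      rw [Finset.smul_sum, ← Finset.sum_add_distrib]
      exact Finset.sum_congr rfl fun v _ => by rw [smul_smul, ← add_smul]
    rw [this, hrel, smul_zero, add_zero, hx]
  have hνk₀ : ν k₀ = 0 := by
    have hlk₀ : lam k₀ ≠ 0 := ne_of_lt hk₀n
    have e : x k₀ * (lam k₀ / -lam k₀) = x k₀ * (-1) := by
      rw [div_neg, div_self hlk₀]
    simp only [hνdef, htdef]
    rw [div_mul_eq_mul_div, mul_comm (x k₀) (lam k₀), mul_comm, mul_div_assoc, e]
    ring
  have hνpos : ∀ v ∈ τ.erase k₀, 0 < ν v := by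
    intro v hv
    obtain ⟨hvk₀, hvτ⟩ := Finset.mem_erase.1 hv
    rcases lt_trichotomy (lam v) 0 with hl | hl | hl
    · -- negative: use minimality, strict via regularity
      have hvN : v ∈ Nτ := Finset.mem_filter.2 ⟨hvτ, hl⟩
      have hmin := hk₀min v hvN
      have hν0 : 0 ≤ ν v := by
        rw [div_le_div_iff₀ (by linarith : (0:ℝ) < -lam k₀) (by linarith : (0:ℝ) < -lam v)] at hmin
        have hd : (0:ℝ) < -lam k₀ := by linarith
        have e : x k₀ / -lam k₀ * lam v * (-lam k₀) = x k₀ * lam v := by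
          rw [div_mul_eq_mul_div, div_mul_eq_mul_div, mul_div_assoc, div_self (ne_of_gt hd), mul_one]
        have e2 : (x v + x k₀ / -lam k₀ * lam v) * (-lam k₀) = x v * (-lam k₀) + x k₀ * lam v := by
          rw [add_mul, e]
        have h2 : (0:ℝ) * (-lam k₀) ≤ (x v + x k₀ / -lam k₀ * lam v) * (-lam k₀) := by
          rw [e2, zero_mul]; nlinarith [hmin]
        have := le_of_mul_le_mul_right h2 hd
        simpa [hνdef, htdef] using this
      rcases hν0.lt_or_eq with h | h
      · exact h
      · exfalso
        have hzmem : z ∈ span ℝ (((τ.erase k₀).erase v : Finset V) : Set V) := by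
          apply mem_span_of_rep (Finset.erase_subset _ _ |>.trans (Finset.erase_subset _ _)) hνz
          intro w hw hw'
          by_cases hwk₀ : w = k₀
          · rw [hwk₀]; exact hνk₀
          · by_cases hwv : w = v
            · rw [hwv]; exact h.symm
            · exact absurd (Finset.mem_erase.2 ⟨hwv, Finset.mem_erase.2 ⟨hwk₀, hw⟩⟩) hw'
        exact hreg k₀ hk₀τ v hvτ (Ne.symm hvk₀) (ne_of_lt hk₀n) (ne_of_lt hl) hzmem
    · have hvj : v ≠ j := fun h => absurd (h ▸ hl) (ne_of_gt hjp)
      have := hxpos v hvτ hvj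
      simp only [hνdef, hl, mul_zero, add_zero]; exact this
    · have : 0 < t * lam v := mul_pos ht hl
      have := hxnn v hvτ
      simp only [hνdef]; linarith
  refine ⟨k₀, hk₀τ, hk₀n, ν, rep_restrict hk₀τ hνz hνk₀, hνpos⟩

lemma uniq_lemma {τ : Finset V} {lam : V → ℝ} (hur : URel τ lam)
    {z : V} {j k : V} (hj : j ∈ τ) (hk : k ∈ τ) (hjp : 0 < lam j) (hkp : 0 < lam k)
    (hzj : posRep (τ.erase j) z) (hzk : posRep (τ.erase k) z) : j = k := by
  by_contra hne
  obtain ⟨x0, hx0, hx0pos⟩ := hzj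
  obtain ⟨y0, hy0, hy0pos⟩ := hzk
  have hx : z = ∑ v ∈ τ, (if v = j then 0 else x0 v) • v := rep_extend hj x0 hx0
  have hy : z = ∑ v ∈ τ, (if v = k then 0 else y0 v) • v := rep_extend hk y0 hy0
  have hzero : (∑ v ∈ τ, ((if v = j then 0 else x0 v) - (if v = k then 0 else y0 v)) • v) = 0 := by
    simp only [sub_smul, Finset.sum_sub_distrib, ← hx, ← hy, sub_self]
  obtain ⟨t, hts⟩ := hur _ hzero
  have h1 := hts j hj
  have h2 := hts k hk
  rw [if_pos rfl, if_neg hne] at h1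
  rw [if_neg (Ne.symm hne), if_pos rfl] at h2
  have hyj : 0 < y0 j := hy0pos j (Finset.mem_erase.2 ⟨hne, hj⟩)
  have hxk : 0 < x0 k := hx0pos k (Finset.mem_erase.2 ⟨Ne.symm hne, hk⟩)
  have ht1 : t < 0 := by nlinarith
  have ht2 : 0 < t := by nlinarith
  linarith

lemma uc_of_urel {τ : Finset V} {lam : V → ℝ} (hur : URel τ lam)
    {j : V} (hj : j ∈ τ) (hlj : lam j ≠ 0) {b : Finset V} (hb : b ⊆ τ) (hjb : j ∉ b) :
    UC b := by
  intro x hx v hv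
  have hx' : (∑ w ∈ τ, (if w ∈ b then x w else 0) • w) = 0 := by
    rw [← Finset.sum_subset hb (fun w _ hw => by rw [if_neg hw, zero_smul])]
    rw [← hx]
    exact Finset.sum_congr rfl fun w hw => by rw [if_pos hw]
  obtain ⟨t, hts⟩ := hur _ hx'
  have hj0 := hts j hj
  rw [if_neg hjb] at hj0
  have ht : t = 0 := by
    rcases mul_eq_zero.1 hj0.symm with h | h
    · exact h
    · exact absurd h hlj
  have := hts v (hb hv)
  rw [if_pos hv, ht, zero_mul] at this
  exact this

variable {σ : Finset V} {α : V} {c : V → ℝ}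

lemma lam_rel (hασ : α ∉ σ) (hc : (∑ β ∈ σ, c β • β) = α) :
    (∑ v ∈ insert α σ, lamF α c v • v) = 0 := by
  rw [Finset.sum_insert hασ]
  have e0 : lamF α c α = 1 := by rw [lamF, if_pos rfl]
  have : ∀ β ∈ σ, lamF α c β • β = -(c β • β) := by
    intro β hβ
    have hβα : β ≠ α := ne_of_mem_of_not_mem hβ hασ
    rw [lamF, if_neg hβα, neg_smul]
  rw [Finset.sum_congr rfl this, Finset.sum_neg_distrib, hc, e0, one_smul]
  exact add_neg_cancel α

lemma lam_urel (hασ : α ∉ σ) (hc : (∑ β ∈ σ, c β • β) = α) (hUC : UC σ) :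
    URel (insert α σ) (lamF α c) := by
  intro μ hμ
  refine ⟨μ α, fun v hv => ?_⟩
  rw [Finset.sum_insert hασ] at hμ
  -- substitute α
  have hα' : μ α • α = ∑ β ∈ σ, (μ α * c β) • β := by
    rw [← hc, Finset.smul_sum]
    exact Finset.sum_congr rfl fun β _ => by rw [smul_smul]
  rw [hα', ← Finset.sum_add_distrib] at hμ
  have h2 : (∑ β ∈ σ, (fun β => μ α * c β + μ β) β • β) = 0 := by
    rw [← hμ]
    exact Finset.sum_congr rfl fun β _ => by rw [add_smul]
  have h3 := hUC _ h2
  rcases Finset.mem_insert.1 hv with h | h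
  · rw [h, lamF, if_pos rfl, mul_one]
  · have := h3 v h
    rw [lamF, if_neg (ne_of_mem_of_not_mem h hασ)]
    linarith

lemma span_erase_top (hασ : α ∉ σ) (hc : (∑ β ∈ σ, c β • β) = α)
    (hσs : span ℝ (σ : Set V) = ⊤) {j : V} (hj : j ∈ insert α σ)
    (hlj : lamF α c j ≠ 0) :
    span ℝ (((insert α σ).erase j : Finset V) : Set V) = ⊤ := by
  rcases Finset.mem_insert.1 hj with h | h
  · rw [h, Finset.erase_insert hασ]; exact hσs
  · have hrel := lam_rel hασ hc
    have hsum : lamF α c j • j = -∑ v ∈ (insert α σ).erase j, lamF α c v • v := by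
      rw [eq_neg_iff_add_eq_zero, ← Finset.add_sum_erase _ _ (Finset.mem_insert_of_mem h)] at *
      exact hrel
    have hjmem : j ∈ span ℝ (((insert α σ).erase j : Finset V) : Set V) := by
      have h1 : lamF α c j • j ∈ span ℝ (((insert α σ).erase j : Finset V) : Set V) := by
        rw [hsum]
        exact neg_mem (Submodule.sum_smul_mem _ _ fun v hv => subset_span hv)
      have := Submodule.smul_mem _ (lamF α c j)⁻¹ h1
      rwa [inv_smul_smul₀ hlj] at this
    rw [eq_top_iff, ← hσs]
    apply span_le.2
    intro v hv
    by_cases hvj : v = j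
    · rw [hvj]; exact hjmem
    · exact subset_span (Finset.mem_coe.2 (Finset.mem_erase.2 ⟨hvj, Finset.mem_insert_of_mem hv⟩))

lemma cover_case2 (hασ : α ∉ σ) (hc : (∑ β ∈ σ, c β • β) = α)
    (hneg : ∀ β ∈ σ, c β ≤ 0) (hS : ∃ β ∈ σ, c β ≠ 0)
    {z : V}
    (hreg : ∀ v ∈ insert α σ, ∀ w ∈ insert α σ, v ≠ w → lamF α c v ≠ 0 → lamF α c w ≠ 0 →
        z ∉ span ℝ ((((insert α σ).erase v).erase w : Finset V) : Set V)) :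
    (∃ j ∈ insert α σ, 0 < lamF α c j ∧ posRep ((insert α σ).erase j) z)
      ↔ posRepOn σ (σ.filter fun β => c β = 0) z := by
  have hlamα : lamF α c α = 1 := by rw [lamF, if_pos rfl]
  have hlamσ : ∀ β ∈ σ, lamF α c β = -c β := fun β hβ => by
    rw [lamF, if_neg (ne_of_mem_of_not_mem hβ hασ)]
  constructor
  · rintro ⟨j, hjτ, hjp, x0, hx0, hx0pos⟩
    rcases Finset.mem_insert.1 hjτ with hjα | hjσ
    · subst hjα
      rw [Finset.erase_insert hασ] at hx0 hx0pos
      exact ⟨x0, hx0, fun v hv => hx0pos v (Finset.mem_filter.1 hv).1⟩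
    · have hcj : c j < 0 := by
        have := hlamσ j hjσ ▸ hjp; linarith
      have hjα : j ≠ α := ne_of_mem_of_not_mem hjσ hασ
      set x : V → ℝ := fun v => if v = j then 0 else x0 v with hxdef
      have hx : z = ∑ v ∈ insert α σ, x v • v := rep_extend hjτ x0 hx0
      rw [Finset.sum_insert hασ] at hx
      have hαsub : x α • α = ∑ β ∈ σ, (x α * c β) • β := by
        rw [← hc, Finset.smul_sum]
        exact Finset.sum_congr rfl fun β _ => by rw [smul_smul]
      rw [hαsub, ← Finset.sum_add_distrib] at hx
      refine ⟨fun v => x α * c v + x v, ?_, ?_⟩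
      · rw [hx]
        exact Finset.sum_congr rfl fun β _ => by rw [add_smul]
      · intro v hv
        obtain ⟨hvσ, hcv⟩ := Finset.mem_filter.1 hv
        have hvj : v ≠ j := fun h => by rw [h] at hcv; exact absurd hcv (ne_of_lt hcj)
        have hvτ : v ∈ (insert α σ).erase j :=
          Finset.mem_erase.2 ⟨hvj, Finset.mem_insert_of_mem hvσ⟩
        have := hx0pos v hvτ
        simp only [hxdef, if_neg hvj, hcv, mul_zero, zero_add]
        exact this
  · rintro ⟨x, hx, hxpos⟩
    set τ := insert α σ with hτdef
    have hrel : (∑ v ∈ τ, lamF α c v • v) = 0 := lam_rel hασ hc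
    set Sτ := σ.filter (fun β => c β ≠ 0) with hSτdef
    have hSτne : Sτ.Nonempty := by
      obtain ⟨β, hβ, hcβ⟩ := hS; exact ⟨β, Finset.mem_filter.2 ⟨hβ, hcβ⟩⟩
    have hlampos : ∀ k ∈ Sτ, 0 < lamF α c k := by
      intro k hk
      obtain ⟨hkσ, hck⟩ := Finset.mem_filter.1 hk
      rw [hlamσ k hkσ]
      have := hneg k hkσ
      rcases this.lt_or_eq with h | h
      · linarith
      · exact absurd h hck
    obtain ⟨k₀, hk₀, hmax⟩ := Finset.exists_max_image Sτ (fun k => -x k / lamF α c k) hSτne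
    have hk₀σ : k₀ ∈ σ := (Finset.mem_filter.1 hk₀).1
    have hk₀τ : k₀ ∈ τ := Finset.mem_insert_of_mem hk₀σ
    have hlk₀ : 0 < lamF α c k₀ := hlampos k₀ hk₀
    set t : ℝ := -x k₀ / lamF α c k₀ with htdef
    by_cases ht : 0 < t
    · -- use k₀
      set ν : V → ℝ := fun v => (if v = α then 0 else x v) + t * lamF α c v with hνdef
      have hbase : (∑ v ∈ τ, (if v = α then (0:ℝ) else x v) • v) = z := by
        rw [hτdef, Finset.sum_insert hασ, if_pos rfl, zero_smul, zero_add, hx]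
        exact Finset.sum_congr rfl fun β hβ => by
          rw [if_neg (ne_of_mem_of_not_mem hβ hασ)]
      have hνz : z = ∑ v ∈ τ, ν v • v := by
        have : ∑ v ∈ τ, ν v • v
            = (∑ v ∈ τ, (if v = α then (0:ℝ) else x v) • v) + t • ∑ v ∈ τ, lamF α c v • v := by
          rw [Finset.smul_sum, ← Finset.sum_add_distrib]
          exact Finset.sum_congr rfl fun v _ => by rw [smul_smul, ← add_smul]
        rw [this, hrel, smul_zero, add_zero, hbase]
      have hνk₀ : ν k₀ = 0 := by
        have : ν k₀ = x k₀ + t * lamF α c k₀ := by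
          simp only [hνdef, if_neg (ne_of_mem_of_not_mem hk₀σ hασ)]
        rw [this, htdef, div_mul_cancel₀ _ (ne_of_gt hlk₀)]
        ring
      have hνpos : ∀ v ∈ τ.erase k₀, 0 < ν v := by
        intro v hv
        obtain ⟨hvk₀, hvτ⟩ := Finset.mem_erase.1 hv
        rcases Finset.mem_insert.1 hvτ with hvα | hvσ
        · have : ν v = t := by
            rw [hνdef]
            simp only [hvα, eq_self_iff_true, if_true, hlamα, mul_one, zero_add]
          rw [this]; exact ht
        · have hvα : v ≠ α := ne_of_mem_of_not_mem hvσ hασ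
          by_cases hcv : c v = 0
          · have hlv : lamF α c v = 0 := by rw [hlamσ v hvσ, hcv, neg_zero]
            have := hxpos v (Finset.mem_filter.2 ⟨hvσ, hcv⟩)
            simp only [hνdef, if_neg hvα, hlv, mul_zero, add_zero]
            exact this
          · have hvS : v ∈ Sτ := Finset.mem_filter.2 ⟨hvσ, hcv⟩
            have hlv : 0 < lamF α c v := hlampos v hvS
            have hle := hmax v hvS
            have hge : 0 ≤ ν v := by
              have h1 : -x v ≤ t * lamF α c v := by
                rw [div_le_iff₀ hlv] at hle
                calc -x v = (-x v / lamF α c v) * lamF α c v := by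
                      rw [div_mul_cancel₀ _ (ne_of_gt hlv)]
                  _ ≤ t * lamF α c v := by
                      apply mul_le_mul_of_nonneg_right _ (le_of_lt hlv)
                      rw [div_le_iff₀ hlv]
                      exact hle
              simp only [hνdef, if_neg hvα]
              linarith
            rcases hge.lt_or_eq with h | h
            · exact h
            · exfalso
              have hzmem : z ∈ span ℝ (((τ.erase k₀).erase v : Finset V) : Set V) := by
                apply mem_span_of_rep
                  (Finset.erase_subset _ _ |>.trans (Finset.erase_subset _ _)) hνz
                intro w hw hw'
                by_cases hwk₀ : w = k₀
                · rw [hwk₀]; exact hνk₀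
                · by_cases hwv : w = v
                  · rw [hwv]; exact h.symm
                  · exact absurd (Finset.mem_erase.2 ⟨hwv, Finset.mem_erase.2 ⟨hwk₀, hw⟩⟩) hw'
              exact hreg k₀ hk₀τ v hvτ (Ne.symm hvk₀) (ne_of_gt hlk₀) (ne_of_gt hlv) hzmem
      exact ⟨k₀, hk₀τ, hlk₀, ν, rep_restrict hk₀τ hνz hνk₀, hνpos⟩
    · -- t ≤ 0 : z is interior to the σ-cone
      push_neg at ht
      have hxall : ∀ v ∈ σ, 0 < x v := by
        intro v hv
        by_cases hcv : c v = 0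
        · exact hxpos v (Finset.mem_filter.2 ⟨hv, hcv⟩)
        · have hvS : v ∈ Sτ := Finset.mem_filter.2 ⟨hv, hcv⟩
          have hlv : 0 < lamF α c v := hlampos v hvS
          have hle : -x v / lamF α c v ≤ 0 := le_trans (hmax v hvS) ht
          have hxv : 0 ≤ x v := by
            rw [div_nonpos_iff] at hle
            rcases hle with ⟨h1, h2⟩ | ⟨h1, h2⟩
            · linarith
            · linarith
          rcases hxv.lt_or_eq with h | h
          · exact h
          · exfalso
            have hzmem : z ∈ span ℝ ((σ.erase v : Finset V) : Set V) := by
              apply mem_span_of_rep (Finset.erase_subset _ _) hx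
              intro w hw hw'
              have : w = v := by
                by_contra hwv
                exact hw' (Finset.mem_erase.2 ⟨hwv, hw⟩)
              rw [this]; exact h.symm
            have hse : (τ.erase α).erase v = σ.erase v := by
              rw [hτdef, Finset.erase_insert hασ]
            have := hreg α (Finset.mem_insert_self α σ) v (Finset.mem_insert_of_mem hv)
              (Ne.symm (ne_of_mem_of_not_mem hv hασ)) (by rw [hlamα]; norm_num)
              (by rw [hlamσ v hv]; simpa using hcv)
            rw [hse] at this
            exact this hzmem
      refine ⟨α, Finset.mem_insert_self α σ, by rw [hlamα]; norm_num, ?_⟩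
      rw [hτdef, Finset.erase_insert hασ]
      exact ⟨x, hx, hxall⟩

lemma posRepOn_iff {b s : Finset V} (hsb : s ⊆ b) (hUC : UC b) {x : V → ℝ} {z : V}
    (hz : z = ∑ v ∈ b, x v • v) : posRepOn b s z ↔ ∀ v ∈ s, 0 < x v := by
  constructor
  · rintro ⟨y, hy, hypos⟩
    intro v hv
    rw [uc_rep_unique hUC hz hy v (hsb hv)]
    exact hypos v hv
  · intro hpos
    exact ⟨x, hz, hpos⟩

lemma agProp_iff {b : Finset V} (hUC : UC b) {a q : V → ℝ} {p h : V}
    (hh : h = ∑ v ∈ b, a v • v) (hpq : p = ∑ v ∈ b, q v • v)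
    (hqne : ∀ v ∈ b, q v ≠ 0) :
    AgProp b p h ↔ ∀ v ∈ b, (0 ≤ a v ∧ (q v < 0 → 0 < a v)) := by
  constructor
  · rintro ⟨cf, cp, hp', hh', hcond⟩
    intro v hv
    have hcpv : cp v = q v := uc_rep_unique hUC hp' hpq v hv
    have hcv : cf v = a v := uc_rep_unique hUC hh' hh v hv
    obtain ⟨h1, h2⟩ := hcond v hv
    rw [hcpv, hcv] at h1 h2
    rcases (hqne v hv).lt_or_gt with hq | hq
    · exact ⟨le_of_lt (h2 hq), fun _ => h2 hq⟩
    · exact ⟨h1 hq, fun hq' => absurd hq (not_lt.2 (le_of_lt hq'))⟩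
  · intro hcond
    refine ⟨a, q, hpq, hh, fun v hv => ?_⟩
    obtain ⟨h1, h2⟩ := hcond v hv
    exact ⟨fun _ => h1, h2⟩

lemma eventually_posRepOn_iff {b s : Finset V} (hsb : s ⊆ b) (hUC : UC b)
    {a q : V → ℝ} {p h : V}
    (hh : h = ∑ v ∈ b, a v • v) (hpq : p = ∑ v ∈ b, q v • v)
    (hqne : ∀ v ∈ s, q v ≠ 0) :
    ∀ᶠ ε in nhdsWithin (0:ℝ) (Set.Ioi 0),
      (posRepOn b s (h + ε • (p - h)) ↔ ∀ v ∈ s, (0 ≤ a v ∧ (q v < 0 → 0 < a v))) := by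
  have hev : ∀ᶠ ε in nhdsWithin (0:ℝ) (Set.Ioi 0), ∀ v ∈ s,
      (0 < (1-ε)*(a v) + ε*(q v) ↔ (0 ≤ a v ∧ (q v < 0 → 0 < a v))) := by
    rw [eventually_all_finset]
    intro v hv
    exact evcoord (a v) (q v) (hqne v hv)
  filter_upwards [hev] with ε hε
  have hrep := rep_affine hh hpq ε
  rw [posRepOn_iff hsb hUC hrep]
  constructor
  · intro hall v hv
    exact (hε v hv).1 (hall v hv)
  · intro hall v hv
    exact (hε v hv).2 (hall v hv)

lemma sum_indicator_unique {F : Finset V} {Q : V → Prop}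
    (hu : ∀ j ∈ F, ∀ k ∈ F, Q j → Q k → j = k) :
    (∑ j ∈ F, ind (Q j)) = ind (∃ j ∈ F, Q j) := by
  unfold ind
  by_cases hex : ∃ j ∈ F, Q j
  · obtain ⟨j, hjF, hQj⟩ := hex
    rw [if_pos ⟨j, hjF, hQj⟩]
    have hfil : F.filter Q = {j} := by
      ext k
      simp only [Finset.mem_filter, Finset.mem_singleton]
      constructor
      · rintro ⟨hkF, hQk⟩; exact hu k hkF j hjF hQk hQj
      · rintro rfl; exact ⟨hjF, hQj⟩
    rw [← Finset.sum_filter, hfil, Finset.sum_singleton]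
  · rw [if_neg hex]
    push_neg at hex
    exact Finset.sum_eq_zero fun j hj => if_neg (hex j hj)

lemma incl_excl (s₀ : Finset V) (B : Prop) (Z : V → Prop) :
    (∑ T ∈ s₀.powerset, (-1:ℤ)^T.card * ind (B ∧ ∀ β ∈ T, Z β))
    = ind (B ∧ ∀ β ∈ s₀, ¬ Z β) := by
  by_cases hB : B
  · have hstep : ∀ T ∈ s₀.powerset,
        (-1:ℤ)^T.card * ind (B ∧ ∀ β ∈ T, Z β)
        = if T ⊆ s₀.filter Z then (-1:ℤ)^T.card else 0 := by
      intro T hT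
      have hTs := Finset.mem_powerset.1 hT
      by_cases hTZ : ∀ β ∈ T, Z β
      · rw [ind_pos ⟨hB, hTZ⟩,
          if_pos (show T ⊆ s₀.filter Z by
            intro β hβ; exact Finset.mem_filter.2 ⟨hTs hβ, hTZ β hβ⟩),
          mul_one]
      · push_neg at hTZ
        obtain ⟨β, hβT, hβZ⟩ := hTZ
        rw [ind_neg (fun h => hβZ (h.2 β hβT)), mul_zero,
          if_neg (fun h => hβZ (Finset.mem_filter.1 (h hβT)).2)]
    rw [Finset.sum_congr rfl hstep]
    have hsub : (s₀.filter Z).powerset ⊆ s₀.powerset :=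
      Finset.powerset_mono.2 (Finset.filter_subset _ _)
    rw [← Finset.sum_subset hsub]
    · have hstep2 : ∀ T ∈ (s₀.filter Z).powerset,
          (if T ⊆ s₀.filter Z then (-1:ℤ)^T.card else 0) = (-1:ℤ)^T.card := by
        intro T hT; rw [if_pos (Finset.mem_powerset.1 hT)]
      rw [Finset.sum_congr rfl hstep2, Finset.sum_powerset_neg_one_pow_card]
      by_cases hempty : s₀.filter Z = ∅
      · rw [if_pos hempty, ind_pos ⟨hB, fun β hβ hZ =>
          Finset.notMem_empty β (hempty ▸ Finset.mem_filter.2 ⟨hβ, hZ⟩)⟩]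
      · rw [if_neg hempty, ind_neg]
        rintro ⟨-, hall⟩
        obtain ⟨β, hβ⟩ := Finset.nonempty_iff_ne_empty.2 hempty
        obtain ⟨hβs, hβZ⟩ := Finset.mem_filter.1 hβ
        exact hall β hβs hβZ
    · intro T hT hT'
      rw [if_neg (fun h => hT' (Finset.mem_powerset.2 h))]
  · rw [ind_neg (fun h => hB h.1)]
    exact Finset.sum_eq_zero fun T hT => by
      rw [ind_neg (fun h : B ∧ ∀ β ∈ T, Z β => hB h.1), mul_zero]

lemma neg_not_mem_of_uc {σ : Finset V} (hUC : UC σ) {β : V} (hβ : β ∈ σ) (hβ0 : β ≠ 0) :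
    -β ∉ σ := by
  intro hnβ
  have hne : β ≠ -β := by
    intro h
    apply hβ0
    have h2 : β + β = 0 := by nth_rewrite 2 [h]; exact add_neg_cancel β
    have : (2:ℝ) • β = 0 := by rw [two_smul]; exact h2
    have := congrArg (fun w => (2:ℝ)⁻¹ • w) this
    simpa [smul_smul] using this
  set x : V → ℝ := fun v => if v = β ∨ v = -β then 1 else 0 with hxdef
  have hpair : {β, -β} ⊆ σ := by
    intro w hw
    rcases Finset.mem_insert.1 hw with h | h
    · exact h ▸ hβ
    · exact (Finset.mem_singleton.1 h) ▸ hnβ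
  have hsum : (∑ v ∈ σ, x v • v) = 0 := by
    rw [← Finset.sum_subset hpair]
    · rw [Finset.sum_insert (by simp [hne]), Finset.sum_singleton]
      have hx1 : x β = 1 := by simp [hxdef]
      have hx2 : x (-β) = 1 := by simp [hxdef]
      rw [hx1, hx2, one_smul, one_smul, add_neg_cancel]
    · intro v hv hv'
      have : x v = 0 := by
        rw [hxdef]
        simp only [ite_eq_right_iff]
        intro hor
        exfalso
        apply hv'
        rcases hor with h | h
        · exact h ▸ Finset.mem_insert_self _ _
        · exact Finset.mem_insert.2 (Or.inr (Finset.mem_singleton.2 h))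
      rw [this, zero_smul]
  have := hUC _ hsum β hβ
  rw [hxdef] at this
  simp at this

lemma max_sub_eq (r : ℝ) : max r 0 - max (-r) 0 = r := by
  rcases le_total 0 r with h | h
  · rw [max_eq_left h, max_eq_right (neg_nonpos.2 h), sub_zero]
  · rw [max_eq_right h, max_eq_left (neg_nonneg.2 h)]; ring

lemma mem_cone_kappa {σ S T : Finset V} (hUC : UC σ) (hS : S ⊆ σ) (hT : T ⊆ σ)
    (hST : ∀ β ∈ T, β ∉ S) (hnm : ∀ β ∈ S, -β ∉ σ)
    {a : V → ℝ} {h : V} (hh : h = ∑ v ∈ σ, a v • v) :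
    h ∈ coneOf ((σ \ T) ∪ S.image (fun β => -β))
      ↔ ((∀ β ∈ σ, β ∉ S → β ∉ T → 0 ≤ a β) ∧ ∀ β ∈ T, a β = 0) := by
  have hdisj : Disjoint (σ \ T) (S.image (fun β => -β)) := by
    rw [Finset.disjoint_left]
    intro w hw1 hw2
    obtain ⟨β, hβS, hβw⟩ := Finset.mem_image.1 hw2
    exact hnm β hβS (hβw ▸ (Finset.mem_sdiff.1 hw1).1)
  have hinj : ∀ x ∈ S, ∀ y ∈ S, -x = -y → x = y := fun x _ y _ hxy => neg_injective hxy
  have hSsub : S ⊆ σ \ T := fun β hβ =>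
    Finset.mem_sdiff.2 ⟨hS hβ, fun hβT => hST β hβT hβ⟩
  constructor
  · rintro ⟨cf, hcf0, hsum⟩
    rw [Finset.sum_union hdisj, Finset.sum_image hinj] at hsum
    set y : V → ℝ := fun v =>
      (if v ∈ σ \ T then cf v else 0) - (if v ∈ S then cf (-v) else 0) with hydef
    have hy : h = ∑ v ∈ σ, y v • v := by
      have e1 : ∑ v ∈ σ, y v • v
          = (∑ v ∈ σ, (if v ∈ σ \ T then cf v else 0) • v)
            - ∑ v ∈ σ, (if v ∈ S then cf (-v) else 0) • v := by
        rw [← Finset.sum_sub_distrib]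
        exact Finset.sum_congr rfl fun v _ => by rw [hydef]; rw [sub_smul]
      have e2 : (∑ v ∈ σ, (if v ∈ σ \ T then cf v else 0) • v) = ∑ v ∈ σ \ T, cf v • v := by
        rw [← Finset.sum_subset (Finset.sdiff_subset (s := σ) (t := T))]
        · exact Finset.sum_congr rfl fun v hv => by rw [if_pos hv]
        · intro v hv hv'; rw [if_neg hv', zero_smul]
      have e3 : (∑ v ∈ σ, (if v ∈ S then cf (-v) else 0) • v) = ∑ v ∈ S, cf (-v) • v := by
        rw [← Finset.sum_subset hS]
        · exact Finset.sum_congr rfl fun v hv => by rw [if_pos hv]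
        · intro v hv hv'; rw [if_neg hv', zero_smul]
      have e4 : ∑ v ∈ S, cf (-v) • (-v) = -∑ v ∈ S, cf (-v) • v := by
        rw [← Finset.sum_neg_distrib]
        exact Finset.sum_congr rfl fun v _ => by rw [smul_neg]
      rw [e1, e2, e3, hsum, e4]
      abel
    have haeq := uc_rep_unique hUC hh hy
    constructor
    · intro β hβ hβS hβT
      have := haeq β hβ
      rw [hydef] at this
      simp only [if_pos (Finset.mem_sdiff.2 ⟨hβ, hβT⟩), if_neg hβS, sub_zero] at this
      rw [this]
      exact hcf0 β
    · intro β hβT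
      have hβσ := hT hβT
      have := haeq β hβσ
      rw [hydef] at this
      simp only [if_neg (fun hm => (Finset.mem_sdiff.1 hm).2 hβT), if_neg (hST β hβT),
        sub_zero] at this
      exact this
  · rintro ⟨hnn, hzT⟩
    set cf : V → ℝ := fun v => if v ∈ σ \ T then max (a v) 0 else max (-(a (-v))) 0 with hcfdef
    refine ⟨cf, fun v => by rw [hcfdef]; dsimp only; split <;> exact le_max_right _ _, ?_⟩
    rw [Finset.sum_union hdisj, Finset.sum_image hinj]
    have e2 : ∑ v ∈ σ \ T, cf v • v = ∑ v ∈ σ \ T, (max (a v) 0) • v :=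
      Finset.sum_congr rfl fun v hv => by rw [hcfdef]; dsimp only; rw [if_pos hv]
    have e3 : ∑ v ∈ S, cf (-v) • (-v) = -∑ v ∈ S, (max (-(a v)) 0) • v := by
      rw [← Finset.sum_neg_distrib]
      refine Finset.sum_congr rfl fun v hv => ?_
      have hnv : -v ∉ σ \ T := fun hm => hnm v hv (Finset.mem_sdiff.1 hm).1
      rw [hcfdef]; dsimp only
      rw [if_neg hnv, neg_neg, smul_neg]
    have e4 : ∑ v ∈ S, (max (-(a v)) 0) • v = ∑ v ∈ σ \ T, (max (-(a v)) 0) • v := by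
      apply Finset.sum_subset hSsub
      intro v hv hv'
      obtain ⟨hvσ, hvT⟩ := Finset.mem_sdiff.1 hv
      rw [max_eq_right (neg_nonpos.2 (hnn v hvσ hv' hvT)), zero_smul]
    have e5 : h = ∑ v ∈ σ \ T, a v • v := by
      rw [hh]
      refine (Finset.sum_subset (Finset.sdiff_subset (s := σ) (t := T)) ?_).symm
      intro v hv hv'
      have hvT : v ∈ T := by
        by_contra hvT
        exact hv' (Finset.mem_sdiff.2 ⟨hv, hvT⟩)
      rw [hzT v hvT, zero_smul]
    rw [e2, e3, e4, e5, ← sub_eq_add_neg, ← Finset.sum_sub_distrib]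
    exact Finset.sum_congr rfl fun v _ => by rw [← sub_smul, max_sub_eq]

lemma cond_iff {σ S : Finset V} (q a : V → ℝ) :
    ((∀ β ∈ σ, β ∉ S → 0 ≤ a β) ∧ (∀ β ∈ (σ \ S).filter (fun β => q β < 0), ¬ a β = 0))
    ↔ ∀ β ∈ σ, β ∉ S → (0 ≤ a β ∧ (q β < 0 → 0 < a β)) := by
  constructor
  · rintro ⟨h1, h2⟩ β hβ hβS
    refine ⟨h1 β hβ hβS, fun hq => ?_⟩
    have := h2 β (Finset.mem_filter.2 ⟨Finset.mem_sdiff.2 ⟨hβ, hβS⟩, hq⟩)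
    exact lt_of_le_of_ne (h1 β hβ hβS) (Ne.symm this)
  · intro h
    constructor
    · intro β hβ hβS; exact (h β hβ hβS).1
    · intro β hβ
      obtain ⟨hm, hq⟩ := Finset.mem_filter.1 hβ
      obtain ⟨hβσ, hβS⟩ := Finset.mem_sdiff.1 hm
      exact ne_of_gt ((h β hβσ hβS).2 hq)

lemma wall_avoid {Δ : Finset V} {p : V} (hp : RegPtV Δ p) {s : Finset V}
    (hsΔ : s ⊆ Δ) (hUCs : UC s) (hcard : s.card + 1 = Module.finrank ℝ V) :
    p ∉ span ℝ (s : Set V) := by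
  apply hp (span ℝ (s : Set V))
  refine ⟨⟨s, hsΔ, rfl⟩, ?_⟩
  rw [finrank_span_finset_eq_card ((uc_iff_li s).1 hUCs)]
  omega

lemma line_mem {κ : Finset V} {w : V} (hw : w ∈ κ) (hnw : -w ∈ κ) (t : ℝ) :
    t • w ∈ coneOf κ := by
  rcases le_total 0 t with ht | ht
  · refine ⟨fun v => if v = w then t else 0, fun v => ?_, ?_⟩
    · dsimp only; split
      · exact ht
      · exact le_refl 0
    rw [Finset.sum_eq_single_of_mem w hw (fun b _ hbw => by simp [hbw])]
    simp
  · refine ⟨fun v => if v = -w then -t else 0, fun v => ?_, ?_⟩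
    · dsimp only; split
      · linarith
      · exact le_refl 0
    rw [Finset.sum_eq_single_of_mem (-w) hnw (fun b _ hbw => by simp [hbw])]
    simp

lemma sign_split (σ : Finset V) (c : V → ℝ) (g : V → ℤ) :
    (∑ β ∈ σ, (if 0 < c β then (1:ℤ) else if c β < 0 then -1 else 0) * g β)
    = (∑ β ∈ σ.filter (fun β => 0 < c β), g β)
      - ∑ β ∈ σ.filter (fun β => c β < 0), g β := by
  rw [Finset.sum_filter, Finset.sum_filter, ← Finset.sum_sub_distrib]
  refine Finset.sum_congr rfl fun β _ => ?_
  split_ifs with h1 h2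
  · exfalso; linarith
  · ring
  · ring
  · ring

/-- Let `V` be a real vector space of dimension `r` and `Δ ⊆ V ∖ {0}` a
finite spanning subset with `Δ = -Δ`.  Let `γ` be a chamber of `V` and `p ∈ γ` (a regular
point; `C(σ)'_γ` depends only on the chamber `γ` of `p`).  Then for every basis `σ` of
`Δ` and every `α ∈ Δ ∖ σ` with expansion `α = Σ_{β ∈ σ} c_β β`, the family
`A_γ(σ) = [C(σ)'_γ]` satisfies the Orlik–Solomon relation
`A_γ(σ) ≡ Σ_{β ∈ σ, c_β ≠ 0} sign(c_β) A_γ(σ ∪ {α} ∖ {β})` modulo `ℒ𝒞_Δ`. -/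
theorem statement19 (V : Type) [AddCommGroup V] [Module ℝ V] [FiniteDimensional ℝ V]
    (Δ : Finset V) (h0 : (0 : V) ∉ Δ)
    (hΔ : Submodule.span ℝ (Δ : Set V) = ⊤) (hsym : ∀ α ∈ Δ, -α ∈ Δ)
    (p : V) (hp : RegPtV Δ p)
    (σ : Finset V) (hσΔ : σ ⊆ Δ)
    (hσi : LinearIndependent ℝ (fun x : {y : V // y ∈ σ} => (x : V)))
    (hσs : Submodule.span ℝ (σ : Set V) = ⊤)
    (α : V) (hα : α ∈ Δ) (hασ : α ∉ σ)
    (c : V → ℝ) (hc : (∑ β ∈ σ, c β • β) = α) :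
    Agamma σ p ∈ Ccone V Δ ∧
    (Agamma σ p - ∑ β ∈ σ,
        (if 0 < c β then (1 : ℤ) else if c β < 0 then -1 else 0) •
          Agamma (insert α (σ.erase β)) p) ∈ LCcone V Δ := by
  have hUCσ : UC σ := (uc_iff_li σ).2 hσi
  set τ := insert α σ with hτdef
  have hrel : (∑ v ∈ τ, lamF α c v • v) = 0 := lam_rel hασ hc
  have hur : URel τ (lamF α c) := lam_urel hασ hc hUCσ
  have hτΔ : τ ⊆ Δ := Finset.insert_subset hα hσΔ
  have hσne : σ.Nonempty := by
    rcases Finset.eq_empty_or_nonempty σ with h | h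
    · exfalso
      rw [h, Finset.sum_empty] at hc
      exact h0 (hc ▸ hα)
    · exact h
  have hfr : Module.finrank ℝ V = σ.card := by
    rw [← finrank_top ℝ V, ← hσs]
    exact finrank_span_finset_eq_card ((uc_iff_li σ).1 hUCσ)
  have hlamα : lamF α c α = 1 := if_pos rfl
  have hlamσ : ∀ β ∈ σ, lamF α c β = -c β := fun β hβ =>
    if_neg (ne_of_mem_of_not_mem hβ hασ)
  have hτcard : τ.card = σ.card + 1 := Finset.card_insert_of_notMem hασ
  have hσα : σ = τ.erase α := by rw [hτdef, Finset.erase_insert hασ]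
  have hlamα0 : lamF α c α ≠ 0 := by rw [hlamα]; norm_num
  have hwallp : ∀ v ∈ τ, lamF α c v ≠ 0 → ∀ w ∈ τ, v ≠ w →
      p ∉ span ℝ (((τ.erase v).erase w : Finset V) : Set V) := by
    intro v hv hlv w hw hvw
    apply wall_avoid hp
    · intro u hu
      exact hτΔ ((Finset.erase_subset _ _) ((Finset.erase_subset _ _) hu))
    · exact uc_of_urel hur hv hlv
        ((Finset.erase_subset _ _).trans (Finset.erase_subset _ _))
        (fun hmem => (Finset.mem_erase.1 (Finset.mem_erase.1 hmem).2).1 rfl)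
    · have hwv : w ∈ τ.erase v := Finset.mem_erase.2 ⟨Ne.symm hvw, hw⟩
      rw [Finset.card_erase_of_mem hwv, Finset.card_erase_of_mem hv, hτcard, ← hfr]
      have h1 : 0 < σ.card := Finset.card_pos.2 hσne
      omega
  have hqne_gen : ∀ j ∈ τ, lamF α c j ≠ 0 → ∀ q : V → ℝ, p = ∑ v ∈ τ.erase j, q v • v →
      ∀ v ∈ τ.erase j, q v ≠ 0 := by
    intro j hj hlj q hq v hv hqv
    obtain ⟨hvj, hvτ⟩ := Finset.mem_erase.1 hv
    apply hwallp j hj hlj v hvτ (Ne.symm hvj)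
    apply mem_span_of_rep (Finset.erase_subset _ _) hq
    intro w hw hw'
    have : w = v := by
      by_contra hne
      exact hw' (Finset.mem_erase.2 ⟨hne, hw⟩)
    rw [this]; exact hqv
  have hbig : ∀ h : V, ∀ᶠ ε in nhdsWithin (0:ℝ) (Set.Ioi 0),
      ((∀ j ∈ τ, lamF α c j ≠ 0 →
        (posRep (τ.erase j) (h + ε • (p - h)) ↔ AgProp (τ.erase j) p h)) ∧
       (∀ v ∈ τ, ∀ w ∈ τ, v ≠ w → lamF α c v ≠ 0 → lamF α c w ≠ 0 →
        (h + ε • (p - h)) ∉ span ℝ (((τ.erase v).erase w : Finset V) : Set V))) := by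
    intro h
    refine Filter.Eventually.and ?_ ?_
    · rw [Finset.eventually_all]
      intro j hj
      by_cases hlj : lamF α c j ≠ 0
      · have hspan := span_erase_top hασ hc hσs hj hlj
        obtain ⟨a, ha⟩ := exists_rep hspan h
        obtain ⟨qq, hqq⟩ := exists_rep hspan p
        have hUCb : UC (τ.erase j) :=
          uc_of_urel hur hj hlj (Finset.erase_subset _ _) (Finset.notMem_erase _ _)
        have hqne := hqne_gen j hj hlj qq hqq
        have hiff := agProp_iff hUCb ha hqq hqne
        filter_upwards [eventually_posRepOn_iff (subset_refl _) hUCb ha hqq hqne]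
          with ε hε hl
        exact hε.trans hiff.symm
      · exact Eventually.of_forall fun ε hl => absurd hl hlj
    · rw [Finset.eventually_all]
      intro v hv
      rw [Finset.eventually_all]
      intro w hw
      by_cases hvw : v ≠ w
      · by_cases hlv : lamF α c v ≠ 0
        · by_cases hlw : lamF α c w ≠ 0
          · filter_upwards [evwall _ p h (hwallp v hv hlv w hw hvw)] with ε hε
            intro _ _ _
            exact hε
          · exact Eventually.of_forall fun ε _ _ hl => absurd hl hlw
        · exact Eventually.of_forall fun ε _ hl _ => absurd hl hlv
      · exact Eventually.of_forall fun ε hne => absurd hne hvw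
  -- global coordinates of p in the basis σ
  obtain ⟨q, hq⟩ := exists_rep hσs p
  have hqσ : p = ∑ v ∈ τ.erase α, q v • v := by rw [← hσα]; exact hq
  have hqσne : ∀ v ∈ σ, q v ≠ 0 := by
    intro v hv
    exact hqne_gen α (Finset.mem_insert_self α σ) hlamα0 q hqσ v (hσα ▸ hv)
  have hcone_simple : ∀ (T : Finset V), T ⊆ σ →
      ∀ (a : V → ℝ) (h : V), h = ∑ v ∈ σ, a v • v →
      (h ∈ coneOf (σ \ T) ↔ ((∀ β ∈ σ, β ∉ T → 0 ≤ a β) ∧ ∀ β ∈ T, a β = 0)) := by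
    intro T hT a h ha
    have hmk := mem_cone_kappa (S := (∅ : Finset V)) hUCσ (Finset.empty_subset σ) hT
      (fun β _ => Finset.notMem_empty β) (fun β hβ => absurd hβ (Finset.notMem_empty β)) ha
    rw [Finset.image_empty, Finset.union_empty] at hmk
    rw [hmk]
    constructor
    · rintro ⟨h1, h2⟩
      exact ⟨fun β hβ hβT => h1 β hβ (Finset.notMem_empty β) hβT, h2⟩
    · rintro ⟨h1, h2⟩
      exact ⟨fun β hβ _ hβT => h1 β hβ hβT, h2⟩
  have hpart1eq : Agamma σ p = ∑ T ∈ (σ.filter (fun β => q β < 0)).powerset,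
      (-1:ℤ)^T.card • charFun (coneOf (σ \ T)) := by
    funext h
    obtain ⟨a, ha⟩ := exists_rep hσs h
    rw [Agamma_eq, Finset.sum_apply]
    have hterm : ∀ T ∈ (σ.filter (fun β => q β < 0)).powerset,
        ((-1:ℤ)^T.card • charFun (coneOf (σ \ T))) h
        = (-1:ℤ)^T.card * ind ((∀ β ∈ σ, 0 ≤ a β) ∧ ∀ β ∈ T, a β = 0) := by
      intro T hT
      have hTσ : T ⊆ σ := (Finset.mem_powerset.1 hT).trans (Finset.filter_subset _ _)
      rw [Pi.smul_apply, smul_eq_mul]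
      congr 1
      rw [charFun_eq]
      refine ind_congr ?_
      rw [hcone_simple T hTσ a h ha]
      constructor
      · rintro ⟨h1, h2⟩
        refine ⟨fun β hβ => ?_, h2⟩
        by_cases hβT : β ∈ T
        · rw [h2 β hβT]
        · exact h1 β hβ hβT
      · rintro ⟨h1, h2⟩
        exact ⟨fun β hβ _ => h1 β hβ, h2⟩
    rw [Finset.sum_congr rfl hterm,
      incl_excl (σ.filter (fun β => q β < 0)) (∀ β ∈ σ, 0 ≤ a β) (fun β => a β = 0)]
    refine ind_congr ?_
    rw [agProp_iff hUCσ ha hq hqσne]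
    constructor
    · intro hcond
      constructor
      · intro β hβ
        exact (hcond β hβ).1
      · intro β hβmem
        obtain ⟨hβσ, hβq⟩ := Finset.mem_filter.1 hβmem
        exact ne_of_gt ((hcond β hβσ).2 hβq)
    · rintro ⟨h1, h2⟩ β hβ
      refine ⟨h1 β hβ, fun hqβ => ?_⟩
      exact lt_of_le_of_ne (h1 β hβ) (Ne.symm (h2 β (Finset.mem_filter.2 ⟨hβ, hqβ⟩)))
  have hmem1 : Agamma σ p ∈ Ccone V Δ := by
    rw [hpart1eq]
    refine AddSubgroup.sum_mem _ fun T hT => ?_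
    refine AddSubgroup.zsmul_mem _ (AddSubgroup.subset_closure ?_) _
    exact ⟨σ \ T, (Finset.sdiff_subset).trans hσΔ, rfl⟩
  refine ⟨hmem1, ?_⟩
  have hPfilt : τ.filter (fun v => 0 < lamF α c v) = insert α (σ.filter (fun β => c β < 0)) := by
    ext w
    constructor
    · intro hw
      obtain ⟨hwτ, hwl⟩ := Finset.mem_filter.1 hw
      rcases Finset.mem_insert.1 hwτ with h' | h'
      · exact h' ▸ Finset.mem_insert_self _ _
      · refine Finset.mem_insert_of_mem (Finset.mem_filter.2 ⟨h', ?_⟩)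
        rw [hlamσ w h'] at hwl
        linarith
    · intro hw
      rcases Finset.mem_insert.1 hw with h' | h'
      · subst h'
        exact Finset.mem_filter.2 ⟨Finset.mem_insert_self _ _, by rw [hlamα]; norm_num⟩
      · obtain ⟨hwσ, hwc⟩ := Finset.mem_filter.1 h'
        exact Finset.mem_filter.2 ⟨Finset.mem_insert_of_mem hwσ, by rw [hlamσ w hwσ]; linarith⟩
  have hNfilt : τ.filter (fun v => lamF α c v < 0) = σ.filter (fun β => 0 < c β) := by
    ext w
    constructor
    · intro hw
      obtain ⟨hwτ, hwl⟩ := Finset.mem_filter.1 hw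
      rcases Finset.mem_insert.1 hwτ with h' | h'
      · exfalso
        rw [h', hlamα] at hwl
        linarith
      · refine Finset.mem_filter.2 ⟨h', ?_⟩
        rw [hlamσ w h'] at hwl
        linarith
    · intro hw
      obtain ⟨hwσ, hwc⟩ := Finset.mem_filter.1 hw
      exact Finset.mem_filter.2 ⟨Finset.mem_insert_of_mem hwσ, by rw [hlamσ w hwσ]; linarith⟩
  have hkey : ∀ h z : V,
      (∀ j ∈ τ, lamF α c j ≠ 0 → (posRep (τ.erase j) z ↔ AgProp (τ.erase j) p h)) →
      (ind (AgProp σ p h)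
        + ∑ β ∈ σ.filter (fun β => c β < 0), ind (AgProp (τ.erase β) p h))
      = ∑ j ∈ τ.filter (fun v => 0 < lamF α c v), ind (posRep (τ.erase j) z) := by
    intro h z hiff
    rw [hPfilt, Finset.sum_insert (fun hmem => hασ (Finset.filter_subset _ _ hmem))]
    congr 1
    · rw [hσα]
      exact (ind_congr (hiff α (Finset.mem_insert_self α σ) hlamα0)).symm
    · refine Finset.sum_congr rfl fun β hβ => ?_
      obtain ⟨hβσ, hβc⟩ := Finset.mem_filter.1 hβ
      have hβτ : β ∈ τ := Finset.mem_insert_of_mem hβσ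
      have hlβ : lamF α c β ≠ 0 := by rw [hlamσ β hβσ]; linarith
      exact (ind_congr (hiff β hβτ hlβ)).symm
  have hu_pos : ∀ z : V, ∀ j ∈ τ.filter (fun v => 0 < lamF α c v),
      ∀ k ∈ τ.filter (fun v => 0 < lamF α c v),
      posRep (τ.erase j) z → posRep (τ.erase k) z → j = k := by
    intro z j hj k hk hzj hzk
    obtain ⟨hjτ, hjl⟩ := Finset.mem_filter.1 hj
    obtain ⟨hkτ, hkl⟩ := Finset.mem_filter.1 hk
    exact uniq_lemma hur hjτ hkτ hjl hkl hzj hzk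
  have hur' : URel τ (fun v => -lamF α c v) := by
    intro μ hμ
    obtain ⟨t, ht⟩ := hur μ hμ
    exact ⟨-t, fun v hv => by rw [ht v hv]; ring⟩
  have hrel' : (∑ v ∈ τ, (fun v => -lamF α c v) v • v) = 0 := by
    have hstep : ∀ v ∈ τ, (fun v => -lamF α c v) v • v = -(lamF α c v • v) := by
      intro v _
      dsimp only
      rw [neg_smul]
    rw [Finset.sum_congr rfl hstep, Finset.sum_neg_distrib, hrel, neg_zero]
  have hu_neg : ∀ z : V, ∀ j ∈ τ.filter (fun v => lamF α c v < 0),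
      ∀ k ∈ τ.filter (fun v => lamF α c v < 0),
      posRep (τ.erase j) z → posRep (τ.erase k) z → j = k := by
    intro z j hj k hk hzj hzk
    obtain ⟨hjτ, hjl⟩ := Finset.mem_filter.1 hj
    obtain ⟨hkτ, hkl⟩ := Finset.mem_filter.1 hk
    exact uniq_lemma hur' hjτ hkτ (by simpa using hjl) (by simpa using hkl) hzj hzk
  have hterm_gen : ∀ (h : V), ∀ β ∈ σ,
      ((if 0 < c β then (1:ℤ) else if c β < 0 then -1 else 0) •
          Agamma (insert α (σ.erase β)) p) h
      = (if 0 < c β then (1:ℤ) else if c β < 0 then -1 else 0)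
          * ind (AgProp (τ.erase β) p h) := by
    intro h β hβ
    rw [Pi.smul_apply, smul_eq_mul]
    congr 1
    have herase : τ.erase β = insert α (σ.erase β) := by
      rw [hτdef, Finset.erase_insert_of_ne (Ne.symm (ne_of_mem_of_not_mem hβ hασ))]
    rw [Agamma_eq, herase]
  by_cases hcase : ∃ β ∈ σ, 0 < c β
  · -- Case 1: exact Orlik–Solomon identity
    have hEQ : Agamma σ p = ∑ β ∈ σ,
        (if 0 < c β then (1:ℤ) else if c β < 0 then -1 else 0) •
          Agamma (insert α (σ.erase β)) p := by
      funext h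
      rw [Agamma_eq, Finset.sum_apply]
      rw [Finset.sum_congr rfl (hterm_gen h),
        sign_split σ c (fun β => ind (AgProp (τ.erase β) p h)), eq_sub_iff_add_eq]
      obtain ⟨ε, hε1, hε2⟩ := (hbig h).exists
      set z := h + ε • (p - h) with hzdef
      rw [hkey h z hε1]
      rw [show σ.filter (fun β => 0 < c β) = τ.filter (fun v => lamF α c v < 0)
        from hNfilt.symm]
      have hconvN : ∀ β ∈ τ.filter (fun v => lamF α c v < 0),
          ind (AgProp (τ.erase β) p h) = ind (posRep (τ.erase β) z) := by
        intro β hβ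
        obtain ⟨hβτ, hβl⟩ := Finset.mem_filter.1 hβ
        exact (ind_congr (hε1 β hβτ (ne_of_lt hβl))).symm
      rw [Finset.sum_congr rfl hconvN]
      rw [sum_indicator_unique (hu_pos z), sum_indicator_unique (hu_neg z)]
      refine ind_congr ?_
      obtain ⟨β₁, hβ₁σ, hβ₁c⟩ := hcase
      have hβ₁τ : β₁ ∈ τ := Finset.mem_insert_of_mem hβ₁σ
      have hβ₁l : lamF α c β₁ < 0 := by rw [hlamσ β₁ hβ₁σ]; linarith
      have hreg' : ∀ v ∈ τ, ∀ w ∈ τ, v ≠ w → (fun v => -lamF α c v) v ≠ 0 →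
          (fun v => -lamF α c v) w ≠ 0 →
          z ∉ span ℝ (((τ.erase v).erase w : Finset V) : Set V) := by
        intro v hv w hw hvw hlv hlw
        refine hε2 v hv w hw hvw ?_ ?_
        · intro h'
          apply hlv
          dsimp only
          rw [h', neg_zero]
        · intro h'
          apply hlw
          dsimp only
          rw [h', neg_zero]
      constructor
      · rintro ⟨j, hj, hzj⟩
        obtain ⟨hjτ, hjl⟩ := Finset.mem_filter.1 hj
        obtain ⟨k, hkτ, hkl, hzk⟩ := swap_lemma hrel hε2 hjτ hjl hzj hβ₁τ hβ₁l
        exact ⟨k, Finset.mem_filter.2 ⟨hkτ, hkl⟩, hzk⟩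
      · rintro ⟨j, hj, hzj⟩
        obtain ⟨hjτ, hjl⟩ := Finset.mem_filter.1 hj
        have hαneg : (fun v => -lamF α c v) α < 0 := by
          dsimp only
          rw [hlamα]
          norm_num
        obtain ⟨k, hkτ, hkl, hzk⟩ := swap_lemma hrel' hreg' hjτ
          (by simpa using hjl) hzj (Finset.mem_insert_self α σ) hαneg
        have hkl' : 0 < lamF α c k := by
          have : -lamF α c k < 0 := hkl
          linarith
        exact ⟨k, Finset.mem_filter.2 ⟨hkτ, hkl'⟩, hzk⟩
    rw [hEQ, sub_self]
    exact (LCcone V Δ).zero_mem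
  · -- Case 2: all coefficients nonpositive
    push_neg at hcase
    have hneg : ∀ β ∈ σ, c β ≤ 0 := hcase
    have hSex : ∃ β ∈ σ, c β ≠ 0 := by
      by_contra hall
      push_neg at hall
      have hzero : (∑ β ∈ σ, c β • β) = 0 :=
        Finset.sum_eq_zero fun β hβ => by rw [hall β hβ, zero_smul]
      rw [hc] at hzero
      exact h0 (hzero ▸ hα)
    set S := σ.filter (fun β => c β ≠ 0) with hSdef
    set Sm := (σ \ S).filter (fun β => q β < 0) with hSmdef
    have hSσ : S ⊆ σ := Finset.filter_subset _ _
    have hnm : ∀ β ∈ S, -β ∉ σ := fun β hβ =>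
      neg_not_mem_of_uc hUCσ (hSσ hβ) (fun h' => h0 (h' ▸ hσΔ (hSσ hβ)))
    obtain ⟨β₀, hβ₀σ, hβ₀c⟩ := hSex
    have hβ₀S : β₀ ∈ S := Finset.mem_filter.2 ⟨hβ₀σ, hβ₀c⟩
    have hposempty : σ.filter (fun β => 0 < c β) = ∅ :=
      Finset.filter_eq_empty_iff.2 (fun β hβ => not_lt.2 (hneg β hβ))
    have hEQ2 : Agamma σ p - (∑ β ∈ σ,
        (if 0 < c β then (1:ℤ) else if c β < 0 then -1 else 0) •
          Agamma (insert α (σ.erase β)) p)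
        = ∑ T ∈ Sm.powerset,
            (-1:ℤ)^T.card • charFun (coneOf ((σ \ T) ∪ S.image (fun β => -β))) := by
      funext h
      obtain ⟨a, ha⟩ := exists_rep hσs h
      rw [Pi.sub_apply, Agamma_eq, Finset.sum_apply, Finset.sum_apply]
      rw [Finset.sum_congr rfl (hterm_gen h)]
      rw [sign_split σ c (fun β => ind (AgProp (τ.erase β) p h))]
      rw [hposempty, Finset.sum_empty, zero_sub, sub_neg_eq_add]
      have hE3ev := eventually_posRepOn_iff
        (Finset.filter_subset (fun β => c β = 0) σ) hUCσ ha hq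
        (fun v hv => hqσne v (Finset.mem_filter.1 hv).1)
      obtain ⟨ε, ⟨hε1, hε2⟩, hε3⟩ := ((hbig h).and hE3ev).exists
      set z := h + ε • (p - h) with hzdef
      rw [hkey h z hε1]
      rw [sum_indicator_unique (hu_pos z)]
      have hcov := cover_case2 hασ hc hneg ⟨β₀, hβ₀σ, hβ₀c⟩ (z := z) hε2
      have hiff1 : (∃ j ∈ τ.filter (fun v => 0 < lamF α c v), posRep (τ.erase j) z)
          ↔ posRepOn σ (σ.filter fun β => c β = 0) z := by
        rw [← hcov]
        constructor
        · rintro ⟨j, hj, hzj⟩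
          exact ⟨j, (Finset.mem_filter.1 hj).1, (Finset.mem_filter.1 hj).2, hzj⟩
        · rintro ⟨j, hjτ, hjl, hzj⟩
          exact ⟨j, Finset.mem_filter.2 ⟨hjτ, hjl⟩, hzj⟩
      rw [ind_congr hiff1, ind_congr hε3]
      have hterm2 : ∀ T ∈ Sm.powerset,
          ((-1:ℤ)^T.card • charFun (coneOf ((σ \ T) ∪ S.image (fun β => -β)))) h
          = (-1:ℤ)^T.card * ind ((∀ β ∈ σ, β ∉ S → 0 ≤ a β) ∧ ∀ β ∈ T, a β = 0) := by
        intro T hT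
        have hTSm : T ⊆ Sm := Finset.mem_powerset.1 hT
        have hTσS : T ⊆ σ \ S := hTSm.trans (Finset.filter_subset _ _)
        have hTσ : T ⊆ σ := hTσS.trans Finset.sdiff_subset
        have hTS : ∀ β ∈ T, β ∉ S := fun β hβ => (Finset.mem_sdiff.1 (hTσS hβ)).2
        rw [Pi.smul_apply, smul_eq_mul]
        congr 1
        rw [charFun_eq]
        refine ind_congr ?_
        rw [mem_cone_kappa hUCσ hSσ hTσ hTS hnm ha]
        constructor
        · rintro ⟨h1, h2⟩
          refine ⟨fun β hβ hβS => ?_, h2⟩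
          by_cases hβT : β ∈ T
          · rw [h2 β hβT]
          · exact h1 β hβ hβS hβT
        · rintro ⟨h1, h2⟩
          exact ⟨fun β hβ hβS _ => h1 β hβ hβS, h2⟩
      rw [Finset.sum_congr rfl hterm2,
        incl_excl Sm (∀ β ∈ σ, β ∉ S → 0 ≤ a β) (fun β => a β = 0)]
      refine ind_congr ?_
      have hAD : (∀ v ∈ σ.filter (fun β => c β = 0), (0 ≤ a v ∧ (q v < 0 → 0 < a v)))
          ↔ ∀ β ∈ σ, β ∉ S → (0 ≤ a β ∧ (q β < 0 → 0 < a β)) := by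
        constructor
        · intro hA β hβ hβS
          refine hA β (Finset.mem_filter.2 ⟨hβ, ?_⟩)
          by_contra hne
          exact hβS (Finset.mem_filter.2 ⟨hβ, hne⟩)
        · intro hD v hv
          obtain ⟨hvσ, hvc⟩ := Finset.mem_filter.1 hv
          exact hD v hvσ (fun hS' => (Finset.mem_filter.1 hS').2 hvc)
      exact hAD.trans (cond_iff q a).symm
    rw [hEQ2]
    refine AddSubgroup.sum_mem _ fun T hT => ?_
    refine AddSubgroup.zsmul_mem _ (AddSubgroup.subset_closure ?_) _
    refine ⟨(σ \ T) ∪ S.image (fun β => -β), ?_, ?_, rfl⟩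
    · intro w hw
      rcases Finset.mem_union.1 hw with h' | h'
      · exact hσΔ (Finset.sdiff_subset h')
      · obtain ⟨β, hβ, rfl⟩ := Finset.mem_image.1 h'
        exact hsym β (hσΔ (hSσ hβ))
    · refine ⟨β₀, (fun h' => h0 (h' ▸ hσΔ hβ₀σ)), fun t => ?_⟩
      apply line_mem
      · refine Finset.mem_union_left _ (Finset.mem_sdiff.2 ⟨hβ₀σ, fun hβT => ?_⟩)
        have hmem := (Finset.mem_powerset.1 hT).trans (Finset.filter_subset _ _) hβT
        exact (Finset.mem_sdiff.1 hmem).2 hβ₀S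
      · exact Finset.mem_union_right _ (Finset.mem_image.2 ⟨β₀, hβ₀S, rfl⟩)

end JK
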